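/- Let (z_n)_{n≥1} be a bounded real sequence and suppose there exists c > 0 such that |z_n − z_{n+m}| ≤ c·m/n for all m, n ∈ ℕ. If for every n ∈ ℕ one has z_{2^k n} → γ as k → ∞, then z_n → γ as n → ∞. -/

import Mathlib

open Filter MeasureTheory Real Set

noncomputable section

/-- `Σ₂ = {0,1}^ℕ`: the space of 0-1 sequences `(x_k)_{k ≥ 1}`, where the entry `x_k`
(for `k ≥ 1`) is represented by `x (k-1) : Bool`. -/
abbrev Sigma2 : Type := ℕ → Bool

/-- The metric `ρ((x_k),(y_k)) = 2^{-min{n : x_n ≠ y_n}}` (up to the indexing convention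
`dist x y = (1/2)^{first index where x,y differ}`). -/
noncomputable instance : MetricSpace Sigma2 :=
  PiNat.metricSpaceOfDiscreteUniformity fun _ => rfl

/-- The digit `x_k ∈ {0,1}` (for `k ≥ 1`) of a sequence, as a real number. -/
def xval (x : Sigma2) (k : ℕ) : ℝ := if x (k - 1) then 1 else 0

/-- `A_θ = {(x_k) ∈ Σ₂ : lim_{n→∞} (1/n) ∑_{k=1}^n x_k x_{2k} = θ}`. -/
def Aset (θ : ℝ) : Set Sigma2 :=
  {x | Tendsto (fun n : ℕ => (∑ k ∈ Finset.Icc 1 n, xval x k * xval x (2 * k)) / (n : ℝ))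
    atTop (nhds θ)}

/-- The cylinder set `[u]` of sequences starting with the finite word `u`
(a list `u` represents the word `u_1 … u_n` with `u_k = u.getD (k-1) false`). -/
def cylinder (u : List Bool) : Set Sigma2 :=
  {x | ∀ i < u.length, x i = u.getD i false}

/-- Initial distribution: `π(0) = 1 - p`, `π(1) = p`. -/
def initProb (p : ℝ) (b : Bool) : ℝ := if b then p else 1 - p

/-- Transition probabilities: `P(0,0) = 1-p`, `P(0,1) = p`, `P(1,0) = q`, `P(1,1) = 1-q`. -/
def transProb (p q : ℝ) (a b : Bool) : ℝ :=
  if a then (if b then 1 - q else q) else (if b then p else 1 - p)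

/-- Markov weight `μ[w] = π(w_1) ∏_{j=1}^{m-1} P(w_j, w_{j+1})` of a finite word `w`. -/
def mweight (p q : ℝ) (w : List Bool) : ℝ :=
  if w = [] then 1
  else initProb p (w.getD 0 false) *
    ∏ j ∈ Finset.range (w.length - 1), transProb p q (w.getD j false) (w.getD (j + 1) false)

/-- The subword `u|_{J(i)} = (u_i, u_{2i}, u_{4i}, …)` of a finite word `u` along the
geometric progression `J(i) = {2^r i : r ≥ 0}`, keeping the indices `2^r i ≤ |u|`. -/
def subword (u : List Bool) (i : ℕ) : List Bool :=
  ((List.range (u.length + 1)).filter (fun r => 2 ^ r * i ≤ u.length)).map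
    (fun r => u.getD (2 ^ r * i - 1) false)

/-- `ℙ_μ[u] = ∏_{i ≤ n, i odd} μ[u|_{J(i)}]` for a finite word `u` of length `n`. -/
def PmuWord (p q : ℝ) (u : List Bool) : ℝ :=
  ∏ i ∈ (Finset.Icc 1 u.length).filter (fun i => Odd i), mweight p q (subword u i)

/-- `Pm` is the (probability) measure `ℙ_μ` on `Σ₂` determined by its values
`ℙ_μ[u] = ∏_{i odd} μ[u|_{J(i)}]` on cylinder sets. -/
def IsPmu (p q : ℝ) (Pm : Measure Sigma2) : Prop :=
  IsProbabilityMeasure Pm ∧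
    ∀ u : List Bool, Pm (cylinder u) = ENNReal.ofReal (PmuWord p q u)

/-- The initial word `x_1^n = x_1 … x_n` of a sequence. -/
def word (x : Sigma2) (n : ℕ) : List Bool := (List.range n).map x

/-- `N_1(x_m^n) = #{k ∈ [m,n] : x_k = 1}`. -/
def N1 (x : Sigma2) (m n : ℕ) : ℕ :=
  ((Finset.Icc m n).filter (fun k => x (k - 1) = true)).card

/-- `N_{ij}(x_1^m) = #{k ≤ m : x_k = i, x_{2k} = j}` (digits `i, j` as booleans). -/
def Nij (x : Sigma2) (i j : Bool) (m : ℕ) : ℕ :=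
  ((Finset.Icc 1 m).filter (fun k => x (k - 1) = i ∧ x (2 * k - 1) = j)).card

/-- `N_{1,odd}(x_1^n) = #{k ≤ n : k odd, x_k = 1}`. -/
def N1odd (x : Sigma2) (n : ℕ) : ℕ :=
  ((Finset.Icc 1 n).filter (fun k => Odd k ∧ x (k - 1) = true)).card

/-- The binary entropy function `H(t) = -t log₂ t - (1-t) log₂ (1-t)`. -/
def Hent (t : ℝ) : ℝ := -(t * Real.logb 2 t) - (1 - t) * Real.logb 2 (1 - t)

/-- Lemma 3.1: if `(z_n)_{n≥1}` is a bounded real sequence, `|z_n - z_{n+m}| ≤ cm/n` for all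
`m, n ≥ 1` (with `c > 0`), and `z_{2^k n} → γ` as `k → ∞` for every `n ≥ 1`, then `z_n → γ`. -/
theorem tendsto_of_tendsto_pow_two_mul (z : ℕ → ℝ) (γ c : ℝ) (hc : 0 < c)
    (hbdd : ∃ M : ℝ, ∀ n : ℕ, 1 ≤ n → |z n| ≤ M)
    (hz : ∀ m n : ℕ, 1 ≤ m → 1 ≤ n → |z n - z (n + m)| ≤ c * m / n)
    (hlim : ∀ n : ℕ, 1 ≤ n → Tendsto (fun k : ℕ => z (2 ^ k * n)) atTop (nhds γ)) :
    Tendsto z atTop (nhds γ) := by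
  rw [Metric.tendsto_atTop]
  intro ε hε
  obtain ⟨N, hNgt⟩ := exists_nat_gt (2 * c / ε)
  set N' := N + 1 with hN'def
  have hN'pos : 0 < N' := Nat.succ_pos N
  have hN'gt : (2 * c / ε) < (N' : ℝ) := by
    refine lt_of_lt_of_le hNgt ?_
    exact_mod_cast Nat.le_succ N
  have hN'posR : (0 : ℝ) < N' := by exact_mod_cast hN'pos
  have hcN : c / N' < ε / 2 := by
    rw [div_lt_iff₀ hN'posR]
    rw [div_lt_iff₀ hε] at hN'gt
    nlinarith
  have hev : ∀ᶠ k in atTop, ∀ m ∈ Finset.Icc N' (2 * N'), |z (2 ^ k * m) - γ| < ε / 2 := by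
    rw [Filter.eventually_all_finset]
    intro m hm
    have hm1 : 1 ≤ m := le_trans hN'pos (Finset.mem_Icc.mp hm).1
    obtain ⟨K, hK⟩ := Metric.tendsto_atTop.mp (hlim m hm1) (ε / 2) (by positivity)
    filter_upwards [Filter.eventually_ge_atTop K] with k hk
    simpa [Real.dist_eq] using hK k hk
  obtain ⟨K, hK⟩ := Filter.eventually_atTop.mp hev
  refine ⟨2 ^ (K + 1) * N', fun n hn => ?_⟩
  have hnN : N' ≤ n :=
    le_trans (Nat.le_mul_of_pos_left N' (Nat.pow_pos (n := K + 1) (by norm_num))) hn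
  set k := Nat.log 2 (n / N') with hkdef
  have hdiv_pos : 0 < n / N' := Nat.div_pos hnN hN'pos
  have h1 : 2 ^ k ≤ n / N' := Nat.pow_log_le_self 2 hdiv_pos.ne'
  have h2 : n / N' < 2 ^ (k + 1) := Nat.lt_pow_succ_log_self (by norm_num) _
  have hlow : 2 ^ k * N' ≤ n := by
    have := (Nat.le_div_iff_mul_le hN'pos).mp h1
    exact this
  have hhigh : n < 2 ^ (k + 1) * N' := (Nat.div_lt_iff_lt_mul hN'pos).mp h2
  have hpk : 0 < 2 ^ k := Nat.pow_pos (n := k) (by norm_num)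
  set m := n / 2 ^ k with hmdef
  have hmlow : N' ≤ m := (Nat.le_div_iff_mul_le hpk).mpr (by linarith [hlow, Nat.mul_comm (2 ^ k) N'])
  have hmhigh : m < 2 * N' := by
    refine (Nat.div_lt_iff_lt_mul hpk).mpr ?_
    calc n < 2 ^ (k + 1) * N' := hhigh
    _ = 2 * N' * 2 ^ k := by ring
  have hkK : K ≤ k := by
    by_contra h
    push_neg at h
    have : 2 ^ (k + 1) * N' ≤ 2 ^ (K + 1) * N' := by
      exact Nat.mul_le_mul_right _ (Nat.pow_le_pow_right (by norm_num) (by omega))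
    omega
  have hkey : |z (2 ^ k * m) - γ| < ε / 2 :=
    hK k hkK m (Finset.mem_Icc.mpr ⟨hmlow, hmhigh.le⟩)
  have hdm : 2 ^ k * m + n % 2 ^ k = n := Nat.div_add_mod n (2 ^ k)
  set r := n % 2 ^ k with hrdef
  have hrlt : r < 2 ^ k := Nat.mod_lt n hpk
  rw [Real.dist_eq]
  rcases Nat.eq_zero_or_pos r with hr0 | hr1
  · have : n = 2 ^ k * m := by omega
    rw [this]
    linarith
  · have h2km1 : 1 ≤ 2 ^ k * m := Nat.mul_pos hpk (hN'pos.trans_le hmlow)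
    have hb := hz r (2 ^ k * m) hr1 h2km1
    rw [hdm] at hb
    have hbound : c * r / ((2 ^ k * m : ℕ) : ℝ) ≤ c / N' := by
      rw [div_le_div_iff₀ (by exact_mod_cast h2km1) hN'posR]
      have e3 : r * N' ≤ 2 ^ k * m := Nat.mul_le_mul hrlt.le hmlow
      have e3R : ((r * N' : ℕ) : ℝ) ≤ ((2 ^ k * m : ℕ) : ℝ) := by exact_mod_cast e3
      calc c * (r : ℝ) * ((N' : ℕ) : ℝ) = c * ((r * N' : ℕ) : ℝ) := by
            rw [Nat.cast_mul]; ring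
        _ ≤ c * ((2 ^ k * m : ℕ) : ℝ) := mul_le_mul_of_nonneg_left e3R hc.le
    have htri : |z n - γ| ≤ |z (2 ^ k * m) - z n| + |z (2 ^ k * m) - γ| := by
      have : z n - γ = -(z (2 ^ k * m) - z n) + (z (2 ^ k * m) - γ) := by ring
      rw [this]
      exact le_trans (abs_add_le _ _) (by rw [abs_neg])
    have : |z (2 ^ k * m) - z n| ≤ c / N' := le_trans hb hbound
    linarith
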